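/- Let X be a geodesic metric space and let Z be a closed, unbounded subset of X. If Z is Morse, then Z is recurrent: for every q ≥ 1 the quantity ρ(q) is finite. -/

import Mathlib

open Metric Set

section Defs

variable {X : Type*} [MetricSpace X]

/-- A unit-speed geodesic segment from `p` to `q`, parameterized on `[0, dist p q]`. -/
def IsGeodesicFrom (γ : ℝ → X) (p q : X) : Prop :=
  γ 0 = p ∧ γ (dist p q) = q ∧
    ∀ s ∈ Set.Icc (0 : ℝ) (dist p q), ∀ t ∈ Set.Icc (0 : ℝ) (dist p q),
      dist (γ s) (γ t) = |s - t|

/-- A geodesic metric space: every pair of points is joined by a geodesic segment. -/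
def IsGeodesicSpace (X : Type*) [MetricSpace X] : Prop :=
  ∀ p q : X, ∃ γ : ℝ → X, IsGeodesicFrom γ p q

/-- CAT(0): a geodesic space in which every geodesic triangle satisfies the comparison
inequality; equivalently (and as formalized here), for every geodesic `γ` from `p` to `q`
and every point `x`, the distance from `x` to a point of `γ` is bounded by the distance
between the corresponding points of a comparison triangle in the Euclidean plane:
`d(x, γ t)² ≤ (1 - t/d)·d(x,p)² + (t/d)·d(x,q)² - (t/d)(1 - t/d)·d²` where `d = d(p,q)`
(written below multiplied through by `d` to avoid division). -/
def IsCAT0Space (X : Type*) [MetricSpace X] : Prop :=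
  IsGeodesicSpace X ∧
    ∀ p q : X, ∀ γ : ℝ → X, IsGeodesicFrom γ p q → ∀ x : X,
      ∀ t ∈ Set.Icc (0 : ℝ) (dist p q),
        dist x (γ t) ^ 2 * dist p q ≤
          (dist p q - t) * dist x p ^ 2 + t * dist x q ^ 2 - t * (dist p q - t) * dist p q

/-- The nearest-point projection `π_Z(x) = {z ∈ Z | d(x,z) = d(x,Z)}`. -/
def projSet (Z : Set X) (x : X) : Set X := {z ∈ Z | dist x z = Metric.infDist x Z}

/-- An `(L,A)`-quasi-geodesic segment defined on `[a,b]`. -/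
def IsQuasiGeodesicOn (L A a b : ℝ) (γ : ℝ → X) : Prop :=
  a ≤ b ∧ ∀ s ∈ Set.Icc a b, ∀ t ∈ Set.Icc a b,
    |s - t| / L - A ≤ dist (γ s) (γ t) ∧ dist (γ s) (γ t) ≤ L * |s - t| + A

/-- `Z` is Morse: for all `L ≥ 1`, `A ≥ 0` there is a bound `M = μ(L,A)` on the distance
to `Z` of points on `(L,A)`-quasi-geodesic segments with both endpoints on `Z`. -/
def IsMorse (Z : Set X) : Prop :=
  ∀ L : ℝ, 1 ≤ L → ∀ A : ℝ, 0 ≤ A → ∃ M : ℝ,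
    ∀ a b : ℝ, ∀ γ : ℝ → X, IsQuasiGeodesicOn L A a b γ → γ a ∈ Z → γ b ∈ Z →
      ∀ s ∈ Set.Icc a b, Metric.infDist (γ s) Z ≤ M

/-- `Z` with the open balls of radius `d(z,z')/3` about `z` and `z'` removed. -/
def recRemoved (Z : Set X) (z z' : X) : Set X :=
  Z \ (Metric.ball z (dist z z' / 3) ∪ Metric.ball z' (dist z z' / 3))

/-- `Z` is `ρ`-recurrent: for every `q ≥ 1`, every rectifiable segment `γ` with endpoints
`z, z' ∈ Z` and `len(γ) ≤ q · d(z,z')` comes within distance `ρ(q)` of `Z'`, where `Z'` is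
`Z` with the open balls of radius `d(z,z')/3` about the endpoints removed.  (Distance to
`Z'` is measured by `infEdist`, which is `∞` when `Z'` is empty, matching
`inf ∅ = ∞` in the definition of `ρ`.) -/
def IsRecurrentWith (Z : Set X) (ρ : ℝ → ℝ) : Prop :=
  ∀ q : ℝ, 1 ≤ q → ∀ a b : ℝ, a ≤ b → ∀ γ : ℝ → X,
    ContinuousOn γ (Set.Icc a b) → γ a ∈ Z → γ b ∈ Z →
    eVariationOn γ (Set.Icc a b) ≤ ENNReal.ofReal (q * dist (γ a) (γ b)) →
    ∃ s ∈ Set.Icc a b,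
      EMetric.infEdist (γ s) (recRemoved Z (γ a) (γ b)) ≤ ENNReal.ofReal (ρ q)

/-- `Z` is recurrent: `ρ(q) < ∞` for every `q ≥ 1`, i.e. some real-valued function `ρ`
witnesses recurrence. -/
def IsRecurrent (Z : Set X) : Prop := ∃ ρ : ℝ → ℝ, IsRecurrentWith Z ρ

/-- `Z` is contracting with gauge `σ`: `σ(r)` bounds `diam(π_Z(x) ∪ π_Z(y))` whenever
`d(x,y) ≤ d(x,Z) ≤ r`, and `σ(r)/r → 0` as `r → ∞`. -/
def IsContractingWith (Z : Set X) (σ : ℝ → ℝ) : Prop :=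
  (∀ r : ℝ, 0 ≤ r → ∀ x y : X, dist x y ≤ Metric.infDist x Z → Metric.infDist x Z ≤ r →
      ∀ p ∈ projSet Z x ∪ projSet Z y, ∀ p' ∈ projSet Z x ∪ projSet Z y,
        dist p p' ≤ σ r) ∧
    Filter.Tendsto (fun r => σ r / r) Filter.atTop (nhds 0)

/-- `Z` is contracting: there is a sublinear contraction gauge. -/
def IsContracting (Z : Set X) : Prop := ∃ σ : ℝ → ℝ, IsContractingWith Z σ

/-- `Z` is strongly contracting: a single constant `C ≥ 0` bounds
`diam(π_Z(x) ∪ π_Z(y))` whenever `d(x,y) ≤ d(x,Z)`. -/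
def IsStronglyContracting (Z : Set X) : Prop :=
  ∃ C : ℝ, 0 ≤ C ∧ ∀ x y : X, dist x y ≤ Metric.infDist x Z →
    ∀ p ∈ projSet Z x ∪ projSet Z y, ∀ p' ∈ projSet Z x ∪ projSet Z y, dist p p' ≤ C

/-- `X` is `δ`-hyperbolic: every geodesic triangle is `δ`-thin, i.e. each side lies in the
`δ`-neighborhood of the union of the other two sides. -/
def IsDeltaHyperbolic (X : Type*) [MetricSpace X] (δ : ℝ) : Prop :=
  ∀ x y z : X, ∀ γ₁ γ₂ γ₃ : ℝ → X,
    IsGeodesicFrom γ₁ x y → IsGeodesicFrom γ₂ y z → IsGeodesicFrom γ₃ x z →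
    ∀ t ∈ Set.Icc (0 : ℝ) (dist x y),
      Metric.infDist (γ₁ t)
        (γ₂ '' Set.Icc (0 : ℝ) (dist y z) ∪ γ₃ '' Set.Icc (0 : ℝ) (dist x z)) ≤ δ

/-- `Z` is quasi-convex: every geodesic segment with both endpoints in `Z` lies in the
`C`-neighborhood of `Z`, for some `C ≥ 0`. -/
def IsQuasiConvex (Z : Set X) : Prop :=
  ∃ C : ℝ, 0 ≤ C ∧ ∀ p ∈ Z, ∀ q ∈ Z, ∀ γ : ℝ → X, IsGeodesicFrom γ p q →
    ∀ t ∈ Set.Icc (0 : ℝ) (dist p q), Metric.infDist (γ t) Z ≤ C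

end Defs

section AuxRec

open MeasureTheory


variable {X : Type*} [MetricSpace X]

/-- partial sums of consecutive distances along a chain -/
def pS (x : ℕ → X) (n : ℕ) : ℝ := ∑ k ∈ Finset.range n, dist (x k) (x (k+1))

lemma pS_zero (x : ℕ → X) : pS x 0 = 0 := by simp [pS]

lemma pS_succ (x : ℕ → X) (n : ℕ) : pS x (n+1) = pS x n + dist (x n) (x (n+1)) :=
  Finset.sum_range_succ _ n

lemma pS_split (x : ℕ → X) {i j : ℕ} (h : i ≤ j) :
    pS x j = pS x i + ∑ k ∈ Finset.Ico i j, dist (x k) (x (k+1)) := by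
  unfold pS
  simp only [Finset.range_eq_Ico]
  exact (Finset.sum_Ico_consecutive (fun k => dist (x k) (x (k+1))) (Nat.zero_le i) h).symm

lemma pS_mono (x : ℕ → X) : Monotone (pS x) := by
  intro i j h
  rw [pS_split x h]
  have h0 : 0 ≤ ∑ k ∈ Finset.Ico i j, dist (x k) (x (k+1)) :=
    Finset.sum_nonneg fun k _ => dist_nonneg
  linarith

lemma pS_nonneg (x : ℕ → X) (n : ℕ) : 0 ≤ pS x n := by
  have := pS_mono x (Nat.zero_le n)
  rw [pS_zero] at this
  exact this

lemma dist_le_pS (x : ℕ → X) {i j : ℕ} (h : i ≤ j) :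
    dist (x i) (x j) ≤ pS x j - pS x i := by
  induction j, h using Nat.le_induction with
  | base => simp
  | succ j hij IH =>
      rw [pS_succ]
      have h1 := dist_triangle (x i) (x j) (x (j+1))
      linarith

lemma pS_sub_le_card (x : ℕ → X) {i j n : ℕ} (hij : i ≤ j) (hjn : j ≤ n)
    (hw : ∀ k, k < n → dist (x k) (x (k+1)) ≤ 1) :
    pS x j - pS x i ≤ (j - i : ℕ) := by
  rw [pS_split x hij]
  have h1 : ∑ k ∈ Finset.Ico i j, dist (x k) (x (k+1)) ≤
      ∑ _k ∈ Finset.Ico i j, (1:ℝ) := by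
    refine Finset.sum_le_sum fun k hk => ?_
    exact hw k (lt_of_lt_of_le (Finset.mem_Ico.mp hk).2 hjn)
  simp only [Finset.sum_const, Nat.card_Ico, nsmul_eq_mul, mul_one] at h1
  linarith

/-- discrete crossing lemma -/
lemma exists_cross (r : ℕ → ℝ) (n : ℕ) (y : ℝ) (h0 : r 0 ≤ y) (hn : y ≤ r n)
    (hstep : ∀ k, k < n → r (k+1) ≤ r k + 1) :
    ∃ k, k ≤ n ∧ y - 1 ≤ r k ∧ r k ≤ y + 1 := by
  classical
  have hPn : ∃ k, y ≤ r k ∧ k ≤ n := ⟨n, hn, le_rfl⟩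
  obtain ⟨hky, hkn⟩ := Nat.find_spec hPn
  cases hk : Nat.find hPn with
  | zero =>
      rw [hk] at hky
      exact ⟨0, Nat.zero_le n, by linarith, by linarith⟩
  | succ k' =>
      rw [hk] at hky hkn
      have hk'lt : k' < Nat.find hPn := by omega
      have hk' : ¬ (y ≤ r k' ∧ k' ≤ n) := Nat.find_min hPn hk'lt
      have hk'n : k' ≤ n := by omega
      have hry : r k' < y := by
        by_contra hcon
        exact hk' ⟨le_of_not_gt hcon, hk'n⟩
      have hk'ltn : k' < n := by
        rcases lt_or_eq_of_le hk'n with h | h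
        · exact h
        · exfalso; rw [h] at hry; linarith
      refine ⟨k' + 1, by omega, ?_, ?_⟩
      · linarith
      · have := hstep k' hk'ltn; linarith

/-- total length of a list of intervals -/
def Bsum (B : List (ℝ × ℝ)) : ℝ := (B.map (fun p => p.2 - p.1)).sum

lemma Bsum_nil : Bsum ([] : List (ℝ × ℝ)) = 0 := rfl

lemma Bsum_cons (pr : ℝ × ℝ) (B : List (ℝ × ℝ)) : Bsum (pr :: B) = (pr.2 - pr.1) + Bsum B := by
  simp [Bsum]

lemma Bsum_nonneg (B : List (ℝ × ℝ)) (hpos : ∀ p ∈ B, p.1 ≤ p.2) : 0 ≤ Bsum B := by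
  induction B with
  | nil => simp [Bsum_nil]
  | cons pr B IH =>
      rw [Bsum_cons]
      have h1 := hpos pr List.mem_cons_self
      have h2 := IH fun p hp => hpos p (List.mem_cons_of_mem pr hp)
      linarith

def BUn (B : List (ℝ × ℝ)) : Set ℝ := ⋃ p ∈ B, Icc p.1 p.2

lemma BUn_nil : BUn ([] : List (ℝ × ℝ)) = ∅ := by simp [BUn]

lemma BUn_cons (pr : ℝ × ℝ) (B : List (ℝ × ℝ)) :
    BUn (pr :: B) = Icc pr.1 pr.2 ∪ BUn B := by
  ext y
  simp only [BUn, Set.mem_iUnion, Set.mem_union, List.mem_cons, exists_prop]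
  constructor
  · rintro ⟨p, (rfl | hp), hy⟩
    · exact Or.inl hy
    · exact Or.inr ⟨p, hp, hy⟩
  · rintro (hy | ⟨p, hp, hy⟩)
    · exact ⟨pr, Or.inl rfl, hy⟩
    · exact ⟨p, Or.inr hp, hy⟩

lemma volume_BUn (B : List (ℝ × ℝ)) (hpos : ∀ p ∈ B, p.1 ≤ p.2) :
    volume (BUn B) ≤ ENNReal.ofReal (Bsum B) := by
  induction B with
  | nil => simp [BUn_nil, Bsum_nil]
  | cons pr B IH =>
      rw [BUn_cons, Bsum_cons]
      have h1 := hpos pr List.mem_cons_self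
      have hpos' : ∀ p ∈ B, p.1 ≤ p.2 := fun p hp => hpos p (List.mem_cons_of_mem pr hp)
      calc volume (Icc pr.1 pr.2 ∪ BUn B) ≤ volume (Icc pr.1 pr.2) + volume (BUn B) :=
            measure_union_le _ _
        _ ≤ ENNReal.ofReal (pr.2 - pr.1) + ENNReal.ofReal (Bsum B) := by
            rw [Real.volume_Icc]
            exact add_le_add le_rfl (IH hpos')
        _ = ENNReal.ofReal ((pr.2 - pr.1) + Bsum B) :=
            (ENNReal.ofReal_add (by linarith) (Bsum_nonneg B hpos')).symm

lemma exists_avoid (B : List (ℝ × ℝ)) (hpos : ∀ p ∈ B, p.1 ≤ p.2) {c e : ℝ}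
    (h : Bsum B < e - c) : ∃ y, y ∈ Icc c e ∧ ∀ p ∈ B, y ∉ Icc p.1 p.2 := by
  by_contra hcon
  push_neg at hcon
  have hsub : Icc c e ⊆ BUn B := by
    intro y hy
    obtain ⟨p, hp, hyp⟩ := hcon y hy
    exact Set.mem_biUnion hp hyp
  have h1 : volume (Icc c e) ≤ ENNReal.ofReal (Bsum B) :=
    le_trans (measure_mono hsub) (volume_BUn B hpos)
  rw [Real.volume_Icc] at h1
  have h2 : e - c ≤ Bsum B := (ENNReal.ofReal_le_ofReal_iff (Bsum_nonneg B hpos)).mp h1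
  linarith

def ChInv (G : Set X) (z z' : X) (q d L : ℝ) (n : ℕ) (x : ℕ → X) (B : List (ℝ × ℝ)) : Prop :=
  x 0 = z ∧ x n = z' ∧
  (∀ k, k < n → dist (x k) (x (k+1)) ≤ 1) ∧
  ((L - 1) * Bsum B + 6 * pS x n ≤ 6 * q * d) ∧
  (∀ k, k ≤ n → (x k ∈ G ∨ ∃ p ∈ B, Icc (dist z (x k) - 2) (dist z (x k) + 2) ⊆ Icc p.1 p.2)) ∧
  (∀ p ∈ B, p.1 ≤ p.2)

def ChTaut (L : ℝ) (n : ℕ) (x : ℕ → X) : Prop :=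
  ∀ i j : ℕ, i ≤ j → j ≤ n → (pS x j - pS x i) / L - 1 ≤ dist (x i) (x j)

lemma taut_exists (hX : IsGeodesicSpace X) (G : Set X) (z z' : X) (q d L : ℝ)
    (hL : 100 ≤ L) :
    ∀ n : ℕ, ∀ x : ℕ → X, ∀ B : List (ℝ × ℝ), ChInv G z z' q d L n x B →
      ∃ n' x' B', ChInv G z z' q d L n' x' B' ∧ ChTaut L n' x' := by
  intro n
  induction n using Nat.strong_induction_on with
  | _ n IH =>
    intro x B hinv
    by_cases hterm : ChTaut L n x
    · exact ⟨n, x, B, hinv, hterm⟩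
    unfold ChTaut at hterm
    push_neg at hterm
    obtain ⟨i, j, hij, hjn, hbad⟩ := hterm
    obtain ⟨hx0, hxn, hw, hbudget, horig, hBpos⟩ := hinv
    have hL0 : (0:ℝ) < L := by linarith
    have hF0 : (0:ℝ) ≤ dist (x i) (x j) := dist_nonneg
    set F := dist (x i) (x j) with hFdef
    have hgap : L * (F + 1) < pS x j - pS x i := by
      have h1 : F + 1 < (pS x j - pS x i) / L := by linarith
      have h2 := (lt_div_iff₀ hL0).mp h1
      linarith
    have hiltj : i < j := by
      rcases lt_or_eq_of_le hij with h | h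
      · exact h
      · exfalso
        rw [h, sub_self, zero_div] at hbad
        linarith
    obtain ⟨geo, hgeo0, hgeoF, hgeoIso⟩ := hX (x i) (x j)
    set m : ℕ := ⌊F⌋₊ + 1 with hmdef
    have hm0 : 0 < m := Nat.succ_pos _
    have hmR : (0:ℝ) < (m:ℝ) := by exact_mod_cast hm0
    set st : ℝ := F / (m:ℝ) with hstdef
    have hst0 : 0 ≤ st := div_nonneg hF0 (le_of_lt hmR)
    have hmst : (m:ℝ) * st = F := by
      rw [hstdef]; field_simp
    have hst1 : st ≤ 1 := by
      rw [hstdef, div_le_one hmR]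
      have h1 := Nat.lt_floor_add_one F
      have h2 : ((⌊F⌋₊ : ℕ) : ℝ) + 1 = (m : ℝ) := by
        rw [hmdef]; push_cast; ring
      linarith
    have hPle : pS x j - pS x i ≤ ((j - i : ℕ) : ℝ) := pS_sub_le_card x hij hjn hw
    have hmlt : m < j - i := by
      have h1 : (m:ℝ) ≤ F + 1 := by
        rw [hmdef]; push_cast
        have := Nat.floor_le hF0
        linarith
      have h2 : F + 1 ≤ L * (F + 1) := by
        calc F + 1 = 1 * (F + 1) := by ring
          _ ≤ L * (F + 1) := mul_le_mul_of_nonneg_right (by linarith) (by linarith)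
      have h3 : (m:ℝ) < ((j - i : ℕ):ℝ) := by linarith
      exact_mod_cast h3
    set n' : ℕ := i + m + (n - j) with hn'def
    have hn'lt : n' < n := by omega
    set x' : ℕ → X := fun k =>
      if k ≤ i then x k else if k ≤ i + m then geo (((k - i : ℕ) : ℝ) * st)
      else x (j + (k - (i + m))) with hx'def
    have hgeoIcc : ∀ k : ℕ, k ≤ m → ((k:ℝ) * st) ∈ Icc (0:ℝ) (dist (x i) (x j)) := by
      intro k hk
      constructor
      · positivity
      · rw [← hFdef, ← hmst]
        have h1 : (k:ℝ) ≤ (m:ℝ) := by exact_mod_cast hk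
        exact mul_le_mul_of_nonneg_right h1 hst0
    have hx'low : ∀ k, k ≤ i → x' k = x k := by
      intro k hk; simp [hx'def, hk]
    have hx'geo : ∀ k, i ≤ k → k ≤ i + m → x' k = geo (((k - i : ℕ) : ℝ) * st) := by
      intro k hk1 hk2
      rcases lt_or_eq_of_le hk1 with h | h
      · have h1 : ¬ (k ≤ i) := by omega
        simp [hx'def, h1, hk2]
      · rw [← h, Nat.sub_self]
        have h1 : x' i = x i := hx'low i le_rfl
        rw [h1]
        simp only [Nat.cast_zero, zero_mul, hgeo0]
    have hx'high : ∀ k, i + m ≤ k → x' k = x (j + (k - (i + m))) := by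
      intro k hk
      rcases lt_or_eq_of_le hk with h | h
      · have h1 : ¬ (k ≤ i) := by omega
        have h2 : ¬ (k ≤ i + m) := by omega
        simp [hx'def, h1, h2]
      · rw [← h, Nat.sub_self, Nat.add_zero]
        have h1 : ¬ (i + m ≤ i) := by omega
        have h2 : x' (i + m) = geo (((i + m - i : ℕ) : ℝ) * st) := by
          have h3 : ¬ (i + m ≤ i) := by omega
          simp [hx'def, h3]
        rw [h2]
        have h4 : (i + m - i : ℕ) = m := by omega
        rw [h4, hmst, hFdef]
        exact hgeoF
    have hstep_geo : ∀ k, i ≤ k → k < i + m →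
        dist (x' k) (x' (k+1)) = st := by
      intro k hk1 hk2
      rw [hx'geo k hk1 (by omega), hx'geo (k+1) (by omega) (by omega)]
      rw [hgeoIso _ (hgeoIcc (k - i) (by omega)) _ (hgeoIcc (k+1-i) (by omega))]
      have hc : ((k+1-i : ℕ):ℝ) = ((k-i : ℕ):ℝ) + 1 := by
        have : (k+1-i : ℕ) = (k-i : ℕ) + 1 := by omega
        rw [this]; push_cast; ring
      rw [hc]
      have he : ((k-i:ℕ):ℝ) * st - (((k-i:ℕ):ℝ) + 1) * st = -st := by ring
      rw [he, abs_neg, abs_of_nonneg hst0]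
    have hw' : ∀ k, k < n' → dist (x' k) (x' (k+1)) ≤ 1 := by
      intro k hk
      by_cases hk1 : k + 1 ≤ i
      · rw [hx'low k (by omega), hx'low (k+1) hk1]
        exact hw k (by omega)
      · by_cases hk2 : k + 1 ≤ i + m
        · rw [hstep_geo k (by omega) (by omega)]
          exact hst1
        · have hk3 : i + m ≤ k := by omega
          rw [hx'high k hk3, hx'high (k+1) (by omega)]
          have h5 : j + (k+1 - (i+m)) = (j + (k - (i+m))) + 1 := by omega
          rw [h5]
          exact hw _ (by omega)
    have hsum' : pS x' n' = pS x i + F + (pS x n - pS x j) := by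
      have e1 : pS x' n' = (∑ k ∈ Finset.Ico 0 i, dist (x' k) (x' (k+1)))
          + (∑ k ∈ Finset.Ico i (i+m), dist (x' k) (x' (k+1)))
          + (∑ k ∈ Finset.Ico (i+m) n', dist (x' k) (x' (k+1))) := by
        unfold pS
        rw [Finset.range_eq_Ico]
        rw [← Finset.sum_Ico_consecutive (fun k => dist (x' k) (x' (k+1)))
            (Nat.zero_le (i+m)) (by omega : i + m ≤ n')]
        rw [← Finset.sum_Ico_consecutive (fun k => dist (x' k) (x' (k+1)))
            (Nat.zero_le i) (by omega : i ≤ i + m)]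
      have e2 : (∑ k ∈ Finset.Ico 0 i, dist (x' k) (x' (k+1))) = pS x i := by
        rw [pS, Finset.range_eq_Ico]
        refine Finset.sum_congr rfl fun k hk => ?_
        have hk' := (Finset.mem_Ico.mp hk).2
        rw [hx'low k (by omega), hx'low (k+1) (by omega)]
      have e3 : (∑ k ∈ Finset.Ico i (i+m), dist (x' k) (x' (k+1))) = F := by
        have h6 : ∀ k ∈ Finset.Ico i (i+m), dist (x' k) (x' (k+1)) = st := by
          intro k hk
          obtain ⟨hk1, hk2⟩ := Finset.mem_Ico.mp hk
          exact hstep_geo k hk1 hk2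
        rw [Finset.sum_congr rfl h6, Finset.sum_const, Nat.card_Ico]
        have h7 : (i + m - i : ℕ) = m := by omega
        rw [h7, nsmul_eq_mul, hmst]
      have e4 : (∑ k ∈ Finset.Ico (i+m) n', dist (x' k) (x' (k+1))) = pS x n - pS x j := by
        have h8 : ∀ k ∈ Finset.Ico (i+m) n', dist (x' k) (x' (k+1))
            = dist (x (j + (k - (i+m)))) (x (j + (k - (i+m)) + 1)) := by
          intro k hk
          obtain ⟨hk1, hk2⟩ := Finset.mem_Ico.mp hk
          rw [hx'high k hk1, hx'high (k+1) (by omega)]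
          have h9 : j + (k + 1 - (i+m)) = j + (k - (i+m)) + 1 := by omega
          rw [h9]
        rw [Finset.sum_congr rfl h8]
        rw [Finset.sum_Ico_eq_sum_range]
        have h10 : n' - (i + m) = n - j := by omega
        rw [h10]
        have h11 : ∀ t ∈ Finset.range (n - j), dist (x (j + (i + m + t - (i+m)))) (x (j + (i + m + t - (i+m)) + 1))
            = dist (x (j + t)) (x (j + t + 1)) := by
          intro t _
          have : i + m + t - (i + m) = t := by omega
          rw [this]
        rw [Finset.sum_congr rfl h11]
        have h12 : pS x n = pS x j + ∑ k ∈ Finset.Ico j n, dist (x k) (x (k+1)) := pS_split x hjn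
        have h13 : (∑ k ∈ Finset.Ico j n, dist (x k) (x (k+1)))
            = ∑ t ∈ Finset.range (n - j), dist (x (j + t)) (x (j + t + 1)) := by
          rw [Finset.sum_Ico_eq_sum_range]
        rw [h13] at h12
        linarith
      rw [e1, e2, e3, e4]
    -- budget
    have hΔ : (L-1)*F + L < (pS x j - pS x i) - F := by linarith
    have hpn' : pS x' n' = pS x n - ((pS x j - pS x i) - F) := by rw [hsum']; ring
    set B' : List (ℝ × ℝ) := (dist z (x i) - (F + 2), dist z (x i) + (F + 2)) :: B with hB'def
    have hBsum' : Bsum B' = (2*F + 4) + Bsum B := by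
      rw [hB'def, Bsum_cons]; ring
    have hb' : (L-1) * Bsum B' + 6 * pS x' n' ≤ 6*q*d := by
      rw [hBsum', hpn']
      have key : (L-1)*(2*F+4) ≤ 6*((pS x j - pS x i) - F) := by
        nlinarith [hgap, mul_nonneg (show (0:ℝ) ≤ L - 1 by linarith) hF0]
      linarith
    -- invariant pieces
    have hx'0 : x' 0 = z := by rw [hx'low 0 (Nat.zero_le i)]; exact hx0
    have hx'n : x' n' = z' := by
      rw [hx'high n' (by omega)]
      have : j + (n' - (i+m)) = n := by omega
      rw [this]; exact hxn
    have horig' : ∀ k, k ≤ n' → (x' k ∈ G ∨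
        ∃ p ∈ B', Icc (dist z (x' k) - 2) (dist z (x' k) + 2) ⊆ Icc p.1 p.2) := by
      intro k hk
      by_cases hk1 : k ≤ i
      · rw [hx'low k hk1]
        rcases horig k (by omega) with h | ⟨p, hp, hsub⟩
        · exact Or.inl h
        · exact Or.inr ⟨p, List.mem_cons_of_mem _ hp, hsub⟩
      · by_cases hk2 : k ≤ i + m
        · right
          refine ⟨(dist z (x i) - (F + 2), dist z (x i) + (F + 2)), List.mem_cons_self, ?_⟩
          have hclose : dist (x' k) (x i) ≤ F := by
            rw [hx'geo k (by omega) hk2]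
            have h20 : dist (geo (((k - i : ℕ) : ℝ) * st)) (geo 0) = |((k - i : ℕ) : ℝ) * st - 0| := by
              have hz0 : (0:ℝ) ∈ Icc (0:ℝ) (dist (x i) (x j)) := ⟨le_rfl, hF0⟩
              exact hgeoIso _ (hgeoIcc (k - i) (by omega)) 0 hz0
            rw [hgeo0] at h20
            rw [h20, sub_zero, abs_of_nonneg (by positivity)]
            have h21 : ((k - i : ℕ):ℝ) ≤ (m:ℝ) := by exact_mod_cast (by omega : k - i ≤ m)
            calc ((k - i : ℕ):ℝ) * st ≤ (m:ℝ) * st := mul_le_mul_of_nonneg_right h21 hst0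
              _ = F := hmst
          have hr : |dist z (x' k) - dist z (x i)| ≤ F := by
            have := abs_dist_sub_le (x' k) (x i) z
            calc |dist z (x' k) - dist z (x i)| = |dist (x' k) z - dist (x i) z| := by
                  rw [dist_comm (x' k) z, dist_comm (x i) z]
              _ ≤ dist (x' k) (x i) := abs_dist_sub_le _ _ _
              _ ≤ F := hclose
          have hr1 : dist z (x i) - F ≤ dist z (x' k) := by
            have := abs_le.mp hr; linarith [this.1]
          have hr2 : dist z (x' k) ≤ dist z (x i) + F := by
            have := abs_le.mp hr; linarith [this.2]
          refine Icc_subset_Icc ?_ ?_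
          · simp only []; linarith
          · simp only []; linarith
        · have hk3 : i + m ≤ k := by omega
          rw [hx'high k hk3]
          rcases horig (j + (k - (i+m))) (by omega) with h | ⟨p, hp, hsub⟩
          · exact Or.inl h
          · exact Or.inr ⟨p, List.mem_cons_of_mem _ hp, hsub⟩
    have hBpos' : ∀ p ∈ B', p.1 ≤ p.2 := by
      intro p hp
      rcases List.mem_cons.mp hp with h | h
      · rw [h]; simp only []; linarith
      · exact hBpos p h
    exact IH n' hn'lt x' B' ⟨hx'0, hx'n, hw', hb', horig', hBpos'⟩
lemma chain_near {Z : Set X} {L M : ℝ} (hL : 1 ≤ L)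
    (hM : ∀ a b : ℝ, ∀ γ : ℝ → X, IsQuasiGeodesicOn L 2 a b γ → γ a ∈ Z → γ b ∈ Z →
      ∀ s ∈ Icc a b, Metric.infDist (γ s) Z ≤ M)
    (n : ℕ) (x : ℕ → X) (hz : x 0 ∈ Z) (hz' : x n ∈ Z)
    (hw : ∀ k, k < n → dist (x k) (x (k+1)) ≤ 1)
    (htaut : ChTaut L n x) :
    ∀ k, k ≤ n → Metric.infDist (x k) Z ≤ M := by
  classical
  have hL0 : (0:ℝ) < L := by linarith
  set T := pS x n with hTdef
  have hT0 : 0 ≤ T := pS_nonneg x n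
  set I : ℝ → ℕ := fun u => Nat.findGreatest (fun i => pS x i ≤ u) n with hIdef
  set θ : ℝ → X := fun u => x (I u) with hθdef
  have hI_le : ∀ u, I u ≤ n := fun u => Nat.findGreatest_le n
  have hI_p : ∀ u, 0 ≤ u → pS x (I u) ≤ u := by
    intro u hu
    have h0 : pS x 0 ≤ u := by rw [pS_zero]; exact hu
    exact Nat.findGreatest_spec (P := fun i => pS x i ≤ u) (Nat.zero_le n) h0
  have hI_gt : ∀ u, 0 ≤ u → I u < n → u < pS x (I u + 1) := by
    intro u _ hu
    have h1 : ¬ (pS x (I u + 1) ≤ u) :=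
      Nat.findGreatest_is_greatest (P := fun i => pS x i ≤ u) (Nat.lt_succ_self _) (by omega)
    exact lt_of_not_ge h1
  have hI_mono : ∀ u v, 0 ≤ u → u ≤ v → I u ≤ I v := by
    intro u v hu huv
    exact Nat.le_findGreatest (hI_le u) (le_trans (hI_p u hu) huv)
  have hθ_at : ∀ k, k ≤ n → θ (pS x k) = x k := by
    intro k hk
    have h1 : k ≤ I (pS x k) := Nat.le_findGreatest hk le_rfl
    have h2 : pS x (I (pS x k)) ≤ pS x k := hI_p _ (pS_nonneg x k)
    have h3 : pS x k ≤ pS x (I (pS x k)) := pS_mono x h1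
    have h4 : dist (x k) (x (I (pS x k))) ≤ pS x (I (pS x k)) - pS x k := dist_le_pS x h1
    have h5 : dist (x k) (x (I (pS x k))) = 0 := le_antisymm (by linarith) dist_nonneg
    exact (eq_of_dist_eq_zero h5).symm
  have hmain : ∀ u v, 0 ≤ u → u ≤ v → v ≤ T →
      dist (θ u) (θ v) ≤ (v - u) + 1 ∧ (v - u)/L - 2 ≤ dist (θ u) (θ v) := by
    intro u v hu huv hvT
    have hv0 : 0 ≤ v := le_trans hu huv
    have hij : I u ≤ I v := hI_mono u v hu huv
    have hjn : I v ≤ n := hI_le v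
    have hpi_le : pS x (I u) ≤ u := hI_p u hu
    have hpj_le : pS x (I v) ≤ v := hI_p v hv0
    have hdeq : dist (θ u) (θ v) = dist (x (I u)) (x (I v)) := rfl
    by_cases hin : I u < n
    · have hpi : u ≤ pS x (I u) + 1 := by
        have h1 := hI_gt u hu hin
        have h2 := pS_succ x (I u)
        have h3 := hw (I u) hin
        linarith
      have hpj_ge : v ≤ pS x (I v) + 1 := by
        by_cases hjn' : I v < n
        · have h1 := hI_gt v hv0 hjn'
          have h2 := pS_succ x (I v)
          have h3 := hw (I v) hjn'
          linarith
        · have h4 : I v = n := by omega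
          rw [h4, ← hTdef]
          linarith
      constructor
      · rw [hdeq]
        have h5 := dist_le_pS x hij
        linarith
      · have h7 := htaut (I u) (I v) hij hjn
        have h8 : (v - u) - 1 ≤ pS x (I v) - pS x (I u) := by linarith
        have h9 : ((v - u) - 1)/L ≤ (pS x (I v) - pS x (I u))/L := by gcongr
        have h10 : (1:ℝ)/L ≤ 1 := by
          rw [div_le_one hL0]; linarith
        have h11 : ((v-u) - 1)/L = (v-u)/L - 1/L := by ring
        rw [hdeq]
        linarith
    · have hi_eq : I u = n := by omega
      have hj_eq : I v = n := by omega
      have hd0 : dist (θ u) (θ v) = 0 := by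
        rw [hdeq, hi_eq, hj_eq, dist_self]
      have hvu : v - u ≤ 0 := by
        have h12 : T ≤ pS x (I u) := by rw [hi_eq]
        linarith
      constructor
      · rw [hd0]; linarith
      · rw [hd0]
        have h13 : (v-u)/L ≤ 0 := div_nonpos_of_nonpos_of_nonneg hvu (le_of_lt hL0)
        linarith
  have hQG : IsQuasiGeodesicOn L 2 0 T θ := by
    refine ⟨hT0, ?_⟩
    intro s hs t ht
    rcases le_total s t with h | h
    · obtain ⟨h1, h2⟩ := hmain s t hs.1 h ht.2
      have habs : |s - t| = t - s := by
        rw [abs_of_nonpos (by linarith)]; ring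
      rw [habs]
      constructor
      · exact h2
      · nlinarith
    · obtain ⟨h1, h2⟩ := hmain t s ht.1 h hs.2
      have habs : |s - t| = s - t := abs_of_nonneg (by linarith)
      rw [habs, dist_comm (θ s) (θ t)]
      constructor
      · exact h2
      · nlinarith
  have hθ0 : θ 0 ∈ Z := by
    have h1 := hθ_at 0 (Nat.zero_le n)
    rw [pS_zero] at h1
    rw [h1]; exact hz
  have hθT : θ T ∈ Z := by
    have h1 := hθ_at n le_rfl
    rw [← hTdef] at h1
    rw [h1]; exact hz'
  intro k hk
  have h1 := hM 0 T θ hQG hθ0 hθT (pS x k)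
    ⟨pS_nonneg x k, by rw [hTdef]; exact pS_mono x hk⟩
  rwa [hθ_at k hk] at h1
lemma qg_const {z0 : X} {L A : ℝ} (hA : 0 ≤ A) :
    IsQuasiGeodesicOn L A 0 0 (fun _ : ℝ => z0) := by
  refine ⟨le_rfl, ?_⟩
  intro s hs t ht
  have hs0 : s = 0 := le_antisymm hs.2 hs.1
  have ht0 : t = 0 := le_antisymm ht.2 ht.1
  subst hs0; subst ht0
  simp only [dist_self, sub_self, abs_zero, zero_div, zero_sub, mul_zero, zero_add]
  exact ⟨by linarith, hA⟩

lemma geodesic_qg {p q : X} {g : ℝ → X} (hg : IsGeodesicFrom g p q) :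
    IsQuasiGeodesicOn 1 0 0 (dist p q) g := by
  refine ⟨dist_nonneg, ?_⟩
  intro s hs t ht
  rw [hg.2.2 s hs t ht]
  constructor
  · simp
  · simp

lemma initial_chain {γ : ℝ → X} {a b Q : ℝ} (hab : a ≤ b)
    (hcont : ContinuousOn γ (Icc a b)) (hQ : 0 ≤ Q)
    (hvar : eVariationOn γ (Icc a b) ≤ ENNReal.ofReal Q) :
    ∃ (n : ℕ) (t : ℕ → ℝ), Monotone t ∧ t 0 = a ∧ t n = b ∧ (∀ k, t k ∈ Icc a b) ∧
      (∀ k, dist (γ (t k)) (γ (t (k+1))) ≤ 1) ∧ pS (fun k => γ (t k)) n ≤ Q := by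
  obtain ⟨δ, hδ0, hδ⟩ := (Metric.uniformContinuousOn_iff_le.mp
    ((isCompact_Icc).uniformContinuousOn_of_continuous hcont)) 1 one_pos
  set N : ℕ := max 1 ⌈(b - a) / δ⌉₊ with hNdef
  have hN0 : 0 < N := lt_of_lt_of_le one_pos (le_max_left _ _)
  have hNR : (0:ℝ) < (N:ℝ) := by exact_mod_cast hN0
  set step : ℝ := (b - a) / N with hstepdef
  have hstep0 : 0 ≤ step := div_nonneg (by linarith) (le_of_lt hNR)
  have hstepδ : step ≤ δ := by
    rw [hstepdef, div_le_iff₀ hNR]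
    have h1 : (b - a) / δ ≤ (⌈(b-a)/δ⌉₊ : ℝ) := Nat.le_ceil _
    have h2 : ((⌈(b-a)/δ⌉₊ : ℕ):ℝ) ≤ (N:ℝ) := by exact_mod_cast le_max_right 1 ⌈(b - a) / δ⌉₊
    have h3 : (b - a) / δ ≤ (N:ℝ) := le_trans h1 h2
    calc b - a = ((b-a)/δ) * δ := by field_simp
      _ ≤ (N:ℝ) * δ := mul_le_mul_of_nonneg_right h3 (le_of_lt hδ0)
      _ = δ * (N:ℝ) := by ring
  set t : ℕ → ℝ := fun k => a + ((min k N : ℕ) : ℝ) * step with htdef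
  have hNstep : (N:ℝ) * step = b - a := by
    rw [hstepdef]; field_simp
  have ht0 : t 0 = a := by simp [htdef]
  have htN : t N = b := by
    rw [htdef]; simp only [min_self]
    rw [hNstep]; ring
  have htmono : Monotone t := by
    intro k l hkl
    rw [htdef]
    have h1 : ((min k N : ℕ):ℝ) ≤ ((min l N : ℕ):ℝ) := by
      exact_mod_cast (by omega : min k N ≤ min l N)
    have := mul_le_mul_of_nonneg_right h1 hstep0
    simp only []
    linarith
  have htmem : ∀ k, t k ∈ Icc a b := by
    intro k
    rw [htdef]
    constructor
    · have h1 : (0:ℝ) ≤ ((min k N : ℕ):ℝ) * step := by positivity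
      simp only []
      linarith
    · have h1 : ((min k N : ℕ):ℝ) ≤ (N:ℝ) := by exact_mod_cast min_le_right k N
      have h2 := mul_le_mul_of_nonneg_right h1 hstep0
      simp only []
      linarith [hNstep]
  have htstep : ∀ k, dist (t k) (t (k+1)) ≤ δ := by
    intro k
    rw [Real.dist_eq, htdef]
    have h1 : min (k+1) N ≤ min k N + 1 := by omega
    have h2 : min k N ≤ min (k+1) N := by omega
    have h1' : ((min (k+1) N : ℕ):ℝ) ≤ ((min k N : ℕ):ℝ) + 1 := by exact_mod_cast h1
    have h2' : ((min k N : ℕ):ℝ) ≤ ((min (k+1) N : ℕ):ℝ) := by exact_mod_cast h2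
    have e : a + ((min k N : ℕ):ℝ)*step - (a + ((min (k+1) N : ℕ):ℝ)*step)
        = -((((min (k+1) N : ℕ):ℝ) - ((min k N : ℕ):ℝ))*step) := by ring
    simp only []
    rw [e, abs_neg, abs_of_nonneg (by nlinarith)]
    nlinarith
  have hdist1 : ∀ k, dist (γ (t k)) (γ (t (k+1))) ≤ 1 := fun k =>
    hδ (t k) (htmem k) (t (k+1)) (htmem (k+1)) (htstep k)
  have hsum : pS (fun k => γ (t k)) N ≤ Q := by
    have h1 : ∑ k ∈ Finset.range N, edist (γ (t (k+1))) (γ (t k)) ≤ eVariationOn γ (Icc a b) :=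
      eVariationOn.sum_le (f := γ) (n := N) htmono htmem
    have h2 : ∑ k ∈ Finset.range N, edist (γ (t (k+1))) (γ (t k))
        = ENNReal.ofReal (pS (fun k => γ (t k)) N) := by
      rw [pS, ENNReal.ofReal_sum_of_nonneg (fun k _ => dist_nonneg)]
      refine Finset.sum_congr rfl fun k _ => ?_
      rw [edist_dist, dist_comm]
    rw [h2] at h1
    exact (ENNReal.ofReal_le_ofReal_iff hQ).mp (le_trans h1 hvar)
  exact ⟨N, t, htmono, ht0, htN, htmem, hdist1, hsum⟩
end AuxRec

/-- In a geodesic metric space, a closed unbounded Morse subset is recurrent. -/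
theorem morse_implies_recurrent
    {X : Type*} [MetricSpace X] (hX : IsGeodesicSpace X)
    (Z : Set X) (hZclosed : IsClosed Z) (hZunbdd : ¬ Bornology.IsBounded Z)
    (hmorse : IsMorse Z) :
    IsRecurrent Z := by
  classical
  have hZne : Z.Nonempty := by
    rcases Set.eq_empty_or_nonempty Z with h | h
    · exfalso; rw [h] at hZunbdd; exact hZunbdd Bornology.isBounded_empty
    · exact h
  obtain ⟨z0, hz0⟩ := hZne
  obtain ⟨M₁, hM₁⟩ := hmorse 1 le_rfl 0 le_rfl
  have hM₁0 : 0 ≤ M₁ := by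
    have h := hM₁ 0 0 (fun _ => z0) (qg_const le_rfl) hz0 hz0 0 ⟨le_rfl, le_rfl⟩
    rwa [Metric.infDist_zero_of_mem hz0] at h
  have hMor : ∀ q : ℝ, 1 ≤ q → ∃ M : ℝ, 0 ≤ M ∧ ∀ a b : ℝ, ∀ γ : ℝ → X,
      IsQuasiGeodesicOn (100*q) 2 a b γ → γ a ∈ Z → γ b ∈ Z →
      ∀ s ∈ Set.Icc a b, Metric.infDist (γ s) Z ≤ M := by
    intro q hq
    obtain ⟨M, hM⟩ := hmorse (100*q) (by linarith) 2 (by norm_num)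
    refine ⟨M, ?_, hM⟩
    have h := hM 0 0 (fun _ => z0) (qg_const (by norm_num)) hz0 hz0 0 ⟨le_rfl, le_rfl⟩
    rwa [Metric.infDist_zero_of_mem hz0] at h
  choose! Mf hMf0 hMf using hMor
  refine ⟨fun q => max (Mf q + 1) (4*(8*(Mf q) + 16)/3 + 2*M₁ + 2), ?_⟩
  intro q hq a b hab γ hcont hza hzb hvar
  set z := γ a with hzdef
  set z' := γ b with hz'def
  set d := dist z z' with hddef
  have hd0 : 0 ≤ d := dist_nonneg
  set M := Mf q with hMdef
  have hM0 : 0 ≤ M := hMf0 q hq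
  set ρq := max (M + 1) (4*(8*M + 16)/3 + 2*M₁ + 2) with hρdef
  have hρ1 : M + 1 ≤ ρq := le_max_left _ _
  have hρ2 : 4*(8*M + 16)/3 + 2*M₁ + 2 ≤ ρq := le_max_right _ _
  -- case d = 0
  rcases eq_or_lt_of_le hd0 with hd | hd
  · refine ⟨a, ⟨le_rfl, hab⟩, ?_⟩
    have hzz : recRemoved Z z z' = Z := by
      unfold recRemoved
      rw [← hddef, ← hd]
      norm_num
    rw [hzz]
    exact le_of_eq_of_le (EMetric.infEdist_zero_of_mem hza) zero_le
  -- d > 0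
  rcases le_total d (8*M + 16) with hdsmall | hdbig
  · -- small case : use a point of Z' near z found along a geodesic to a far point of Z
    obtain ⟨ζ, hζZ, hζfar⟩ : ∃ ζ ∈ Z, 4*d/3 + M₁ + 1 < dist z ζ := by
      by_contra hcon
      push_neg at hcon
      refine hZunbdd ((Metric.isBounded_closedBall (x := z) (r := 4*d/3 + M₁ + 1)).subset ?_)
      intro w hw
      rw [Metric.mem_closedBall, dist_comm]
      exact hcon w hw
    obtain ⟨g, hg⟩ := hX z ζ
    set tt := 4*d/3 + M₁ + 1 with httdef
    have htt0 : 0 ≤ tt := by rw [httdef]; linarith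
    have httmem : tt ∈ Set.Icc 0 (dist z ζ) := ⟨htt0, le_of_lt hζfar⟩
    have h1 : Metric.infDist (g tt) Z ≤ M₁ := by
      refine hM₁ 0 (dist z ζ) g (geodesic_qg hg) ?_ ?_ tt httmem
      · rw [hg.1]; exact hza
      · rw [hg.2.1]; exact hζZ
    obtain ⟨w, hwZ, hwd⟩ := (Metric.infDist_lt_iff ⟨z0, hz0⟩).mp
      (lt_of_le_of_lt h1 (by linarith : M₁ < M₁ + 1))
    have hgt : dist z (g tt) = tt := by
      have h2 := hg.2.2 0 ⟨le_rfl, dist_nonneg⟩ tt httmem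
      rw [hg.1] at h2
      rw [h2, abs_of_nonpos (by linarith : 0 - tt ≤ 0)]
      ring
    have hwz : 4*d/3 ≤ dist z w := by
      have h3 : dist z (g tt) ≤ dist z w + dist w (g tt) := dist_triangle z w (g tt)
      have h4 : dist w (g tt) = dist (g tt) w := dist_comm _ _
      rw [hgt] at h3
      rw [h4] at h3
      rw [httdef] at h3
      linarith
    have hwz' : d/3 ≤ dist z' w := by
      have h5 : dist z w ≤ dist z z' + dist z' w := dist_triangle z z' w
      rw [← hddef] at h5
      linarith
    have hwmem : w ∈ recRemoved Z z z' := by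
      refine ⟨hwZ, ?_⟩
      intro hcon
      rcases hcon with h | h
      · rw [Metric.mem_ball, dist_comm, ← hddef] at h
        linarith
      · rw [Metric.mem_ball, dist_comm, ← hddef] at h
        linarith
    refine ⟨a, ⟨le_rfl, hab⟩, ?_⟩
    calc EMetric.infEdist z (recRemoved Z z z') ≤ edist z w :=
          EMetric.infEdist_le_edist_of_mem hwmem
      _ = ENNReal.ofReal (dist z w) := edist_dist _ _
      _ ≤ ENNReal.ofReal ρq := by
          refine ENNReal.ofReal_le_ofReal ?_
          have h6 : dist z w ≤ tt + (M₁ + 1) := by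
            have h7 := dist_triangle z (g tt) w
            rw [hgt] at h7
            linarith
          rw [httdef] at h6
          have h8 : 4*d/3 ≤ 4*(8*M+16)/3 := by linarith
          linarith
  · -- main case : d ≥ 8M + 16
    have hd0' : (0:ℝ) < d := lt_of_lt_of_le (by linarith) hdbig
    have hQ0 : 0 ≤ q * d := mul_nonneg (by linarith) hd0
    obtain ⟨N, t, htmono, ht0, htN, htmem, hdist1, hsum⟩ :=
      initial_chain hab hcont hQ0 hvar
    set G := γ '' (Set.Icc a b) with hGdef
    set L := 100 * q with hLdef
    have hL : 100 ≤ L := by rw [hLdef]; nlinarith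
    have hinv : ChInv G z z' q d L N (fun k => γ (t k)) [] := by
      refine ⟨by simp only []; rw [ht0], by simp only []; rw [htN], fun k _ => hdist1 k, ?_, ?_, ?_⟩
      · rw [Bsum_nil]
        have h9 := hsum
        nlinarith
      · intro k _
        exact Or.inl ⟨t k, htmem k, rfl⟩
      · intro p hp
        exact absurd hp List.not_mem_nil
    obtain ⟨nh, xh, Bh, ⟨hx0, hxn, hw, hbudget, horig, hBpos⟩, htaut⟩ :=
      taut_exists hX G z z' q d L hL N _ [] hinv
    have hnear : ∀ k, k ≤ nh → Metric.infDist (xh k) Z ≤ M := by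
      refine chain_near (by linarith : (1:ℝ) ≤ L) ?_ nh xh ?_ ?_ hw htaut
      · intro a' b' γ' hqg hza' hzb' s hs
        rw [hLdef] at hqg
        exact hMf q hq a' b' γ' hqg hza' hzb' s hs
      · rw [hx0]; exact hza
      · rw [hxn]; exact hzb
    have hBs : Bsum Bh < 13*d/24 - 11*d/24 := by
      have h1 : (L-1) * Bsum Bh ≤ 6*q*d := by
        have h2 := pS_nonneg xh nh
        linarith
      have h3 : 0 ≤ Bsum Bh := Bsum_nonneg Bh hBpos
      by_contra hcon
      push_neg at hcon
      have h4 : d/12 ≤ Bsum Bh := by linarith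
      rw [hLdef] at h1
      have h5 : (100*q - 1) * (d/12) ≤ (100*q-1) * Bsum Bh :=
        mul_le_mul_of_nonneg_left h4 (by linarith)
      have h6 : 0 ≤ (q - 1) * d := mul_nonneg (by linarith) (le_of_lt hd0')
      nlinarith
    obtain ⟨y, hymem, hyavoid⟩ := exists_avoid Bh hBpos hBs
    have hy1 : 11*d/24 ≤ y := hymem.1
    have hy2 : y ≤ 13*d/24 := hymem.2
    obtain ⟨kk, hkn, hyr1, hyr2⟩ := exists_cross (fun k => dist z (xh k)) nh y
      (by beta_reduce; rw [hx0, dist_self]; linarith)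
      (by beta_reduce; rw [hxn, ← hddef]; linarith)
      (by
        intro k hk
        have h1 := dist_triangle z (xh k) (xh (k+1))
        have h2 := hw k hk
        beta_reduce
        linarith)
    have horigk : xh kk ∈ G := by
      rcases horig kk hkn with h | ⟨p, hp, hsub⟩
      · exact h
      · exfalso
        have hy_in : y ∈ Set.Icc (dist z (xh kk) - 2) (dist z (xh kk) + 2) :=
          ⟨by linarith, by linarith⟩
        exact hyavoid p hp (hsub hy_in)
    obtain ⟨u, humem, hux⟩ := horigk
    obtain ⟨w, hwZ, hwd⟩ := (Metric.infDist_lt_iff ⟨z0, hz0⟩).mp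
      (lt_of_le_of_lt (hnear kk hkn) (by linarith : M < M + 1))
    have hr1 : 11*d/24 - 1 ≤ dist z (xh kk) := by linarith
    have hr2 : dist z (xh kk) ≤ 13*d/24 + 1 := by linarith
    have hwz : d/3 ≤ dist z w := by
      have h5 : dist z (xh kk) ≤ dist z w + dist w (xh kk) := dist_triangle z w (xh kk)
      rw [dist_comm w (xh kk)] at h5
      linarith
    have hwz' : d/3 ≤ dist z' w := by
      have h6 : dist z z' ≤ dist z w + dist w z' := dist_triangle z w z'
      have h7 : dist z w ≤ dist z (xh kk) + dist (xh kk) w := dist_triangle z (xh kk) w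
      rw [← hddef] at h6
      rw [dist_comm w z'] at h6
      linarith
    have hwmem : w ∈ recRemoved Z z z' := by
      refine ⟨hwZ, ?_⟩
      intro hcon
      rcases hcon with h | h
      · rw [Metric.mem_ball, dist_comm, ← hddef] at h
        linarith
      · rw [Metric.mem_ball, dist_comm, ← hddef] at h
        linarith
    refine ⟨u, humem, ?_⟩
    calc EMetric.infEdist (γ u) (recRemoved Z z z') ≤ edist (γ u) w :=
          EMetric.infEdist_le_edist_of_mem hwmem
      _ = ENNReal.ofReal (dist (γ u) w) := edist_dist _ _
      _ ≤ ENNReal.ofReal ρq := by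
          refine ENNReal.ofReal_le_ofReal ?_
          rw [hux]
          linarith
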